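/- Let c = c^cr = 1/(4 log 2). There exist a constant C₀ > 0 and N₀ such that for every integer N ≥ N₀ and every vertex u ∈ V_N, |P²(u,u) − 4c²·(log N)/N²| ≤ C₀/N², where P²(u,u) = Σ_{x ∈ V_N} P(u,x)·P(x,u) = (1/Z_N²)·Σ_{x ≠ u} p(u,x)². -/

import Mathlib

open scoped BigOperators

/-- Vertices of the discrete 2-dimensional torus. -/
abbrev Vtx (N : ℕ) : Type := ZMod N × ZMod N

/-- `ρ_N(i)`: for a residue represented in `{0,…,N−1}`, `ρ_N(i) = i` if `i ≤ N/2`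
and `ρ_N(i) = N − i` otherwise. -/
def rhoN (N : ℕ) (i : ZMod N) : ℕ :=
  if 2 * i.val ≤ N then i.val else N - i.val

/-- Torus distance `ρ(u,v) = ρ_N(u₁ − v₁) + ρ_N(u₂ − v₂)`. -/
def torusDist (N : ℕ) (u v : Vtx N) : ℕ :=
  rhoN N (u.1 - v.1) + rhoN N (u.2 - v.2)

/-- Connection probability `p(u,v) = min(c/(N·ρ(u,v)), 1)` for `u ≠ v`, `p(u,u) = 0`. -/
noncomputable def edgeProb (N : ℕ) (c : ℝ) (u v : Vtx N) : ℝ :=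
  if u = v then 0 else min (c / ((N : ℝ) * (torusDist N u v : ℝ))) 1

/-- The critical value `c^cr = 1/(4 log 2)`. -/
noncomputable def ccr : ℝ := 1 / (4 * Real.log 2)

/-- Transition matrix `P(u,v) = p(u,v)/Z_N` for `u ≠ v`, `P(u,u) = 0`, where
`Z_N = Σ_{w ≠ u} p(u,w)` (this holds automatically since `p(u,u) = 0`). -/
noncomputable def transP (N : ℕ) [NeZero N] (c : ℝ) (u v : Vtx N) : ℝ :=
  edgeProb N c u v / ∑ w : Vtx N, edgeProb N c u w

open Finset

/-- real harmonic number as a sum over `Icc 1 n` -/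
noncomputable def Hh (n : ℕ) : ℝ := ∑ r ∈ Icc 1 n, (r : ℝ)⁻¹

lemma Icc_to_range (m : ℕ) (f : ℕ → ℝ) : ∑ b ∈ Icc 1 m, f b = ∑ i ∈ range m, f (1 + i) := by
  rw [← Finset.Ico_add_one_right_eq_Icc, Finset.sum_Ico_eq_sum_range]
  simp

lemma Hh_range (n : ℕ) : Hh n = ∑ i ∈ range n, ((1 : ℕ) + i : ℝ)⁻¹ := by
  rw [Hh, Icc_to_range]
  push_cast
  rfl

lemma Hh_eq_harmonic (n : ℕ) : Hh n = (harmonic n : ℝ) := by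
  rw [harmonic_eq_sum_Icc, Hh]
  push_cast
  rfl

lemma Hh_nonneg (n : ℕ) : 0 ≤ Hh n := by
  apply Finset.sum_nonneg
  intro i _
  positivity

lemma Hh_mono : Monotone Hh := by
  intro a b hab
  apply Finset.sum_le_sum_of_subset_of_nonneg
  · exact Finset.Icc_subset_Icc_right hab
  · intro i _ _; positivity

lemma log_le_Hh (n : ℕ) : Real.log (n + 1) ≤ Hh n := by
  rw [Hh_eq_harmonic]
  exact_mod_cast log_add_one_le_harmonic n

lemma Hh_le (n : ℕ) (h : n ≠ 0) : Hh n ≤ 1 + Real.log n := by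
  rw [Hh_eq_harmonic]
  exact_mod_cast harmonic_le_one_add_log n

lemma Hh_gamma_lb {n : ℕ} (h : 1 ≤ n) :
    Real.eulerMascheroniConstant + Real.log n ≤ Hh n := by
  have := Real.eulerMascheroniConstant_lt_eulerMascheroniSeq' n
  rw [Real.eulerMascheroniSeq', if_neg (by omega)] at this
  rw [Hh_eq_harmonic]
  linarith

lemma Hh_gamma_ub {n : ℕ} (h : 1 ≤ n) :
    Hh n ≤ Real.eulerMascheroniConstant + Real.log n + (n : ℝ)⁻¹ := by
  have h1 := Real.eulerMascheroniSeq_lt_eulerMascheroniConstant n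
  rw [Real.eulerMascheroniSeq] at h1
  have hn : (0 : ℝ) < n := by exact_mod_cast h
  have h2 : Real.log (n + 1) ≤ Real.log n + (n : ℝ)⁻¹ := by
    have : Real.log ((n + 1) / n) ≤ (n + 1) / n - 1 :=
      Real.log_le_sub_one_of_pos (by positivity)
    rw [Real.log_div (by positivity) (by positivity)] at this
    have : (n + 1 : ℝ) / n - 1 = (n : ℝ)⁻¹ := by field_simp; ring
    linarith [Real.log_div (show (n:ℝ)+1 ≠ 0 by positivity) (show (n:ℝ) ≠ 0 by positivity) ▸
      (Real.log_le_sub_one_of_pos (show (0:ℝ) < ((n:ℝ)+1)/n by positivity)), this]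
  rw [Hh_eq_harmonic]
  linarith

lemma Hh_succ (n : ℕ) : Hh (n + 1) = Hh n + ((n : ℝ) + 1)⁻¹ := by
  rw [Hh_range, Hh_range, Finset.sum_range_succ]
  push_cast
  rw [add_comm (1:ℝ) (n:ℝ)]

/-- row sum `∑_{b=1}^{k} 1/(a+b) = H(a+k) - H(a)` -/
lemma Srow_eq (a k : ℕ) : ∑ b ∈ Icc 1 k, ((a : ℝ) + b)⁻¹ = Hh (a + k) - Hh a := by
  rw [Hh_range, Hh_range, ← Finset.sum_Ico_eq_sub _ (Nat.le_add_right a k),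
    Finset.sum_Ico_eq_sum_range, Icc_to_range]
  simp only [Nat.add_sub_cancel_left]
  apply Finset.sum_congr rfl
  intro i _
  push_cast
  ring_nf

/-- Abel: `∑_{j=1}^{n} H j = (n+1) H n - n` -/
lemma sum_Hh (n : ℕ) : ∑ i ∈ range n, Hh (1 + i) = ((n : ℝ) + 1) * Hh n - n := by
  induction n with
  | zero => simp [Hh]
  | succ n ih =>
    rw [Finset.sum_range_succ, ih]
    have h1 : (1 : ℕ) + n = n + 1 := by omega
    rw [h1, Hh_succ]
    have h2 : ((n : ℝ) + 1) ≠ 0 := by positivity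
    push_cast
    field_simp
    ring

/-- diagonal double sum identity -/
lemma SS_mm (m : ℕ) :
    (∑ a ∈ Icc 1 m, ∑ b ∈ Icc 1 m, ((a : ℝ) + b)⁻¹)
      = (2 * m + 1) * Hh (2 * m) - (2 * m + 2) * Hh m := by
  have h1 : ∀ a ∈ Icc 1 m, (∑ b ∈ Icc 1 m, ((a : ℝ) + b)⁻¹) = Hh (a + m) - Hh a :=
    fun a _ => Srow_eq a m
  rw [Finset.sum_congr rfl h1, Finset.sum_sub_distrib, Icc_to_range, Icc_to_range]
  have h2 : ∑ i ∈ range m, Hh (1 + i + m) = ∑ j ∈ range (2 * m), Hh (1 + j) - ∑ j ∈ range m, Hh (1 + j) := by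
    rw [← Finset.sum_Ico_eq_sub _ (by omega : m ≤ 2 * m), Finset.sum_Ico_eq_sum_range]
    have : 2 * m - m = m := by omega
    rw [this]
    apply Finset.sum_congr rfl
    intro i _
    congr 1
    omega
  rw [h2, sum_Hh, sum_Hh]
  push_cast
  ring

lemma log2_lt_one : Real.log 2 < 1 := by
  have := Real.log_lt_sub_one_of_pos (by norm_num : (0:ℝ) < 2) (by norm_num)
  linarith

lemma log2_pos : 0 < Real.log 2 := Real.log_pos (by norm_num)

/-- main diagonal estimate -/
lemma SS_mm_est {m : ℕ} (hm : 1 ≤ m) :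
    |(∑ a ∈ Icc 1 m, ∑ b ∈ Icc 1 m, ((a : ℝ) + b)⁻¹) - 2 * m * Real.log 2|
      ≤ Real.log m + 8 := by
  rw [SS_mm]
  have hmR : (1 : ℝ) ≤ (m : ℝ) := by exact_mod_cast hm
  have hmpos : (0 : ℝ) < m := by linarith
  have hlog2m : Real.log (2 * m) = Real.log 2 + Real.log m := by
    rw [Real.log_mul (by norm_num) (by positivity)]
  set γ := Real.eulerMascheroniConstant with hγ
  have hγ1 : γ < 2/3 := Real.eulerMascheroniConstant_lt_two_thirds
  have hγ0 : 1/2 < γ := Real.one_half_lt_eulerMascheroniConstant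
  have h2m : 1 ≤ 2 * m := by omega
  have e2lb := Hh_gamma_lb h2m
  have e2ub := Hh_gamma_ub h2m
  have e1lb := Hh_gamma_lb hm
  have e1ub := Hh_gamma_ub hm
  push_cast at e2lb e2ub e1lb e1ub
  rw [hlog2m] at e2lb e2ub
  set e2 : ℝ := Hh (2 * m) - γ - (Real.log 2 + Real.log m) with he2
  set e1 : ℝ := Hh m - γ - Real.log m with he1
  have he2b : 0 ≤ e2 ∧ e2 ≤ (2 * (m:ℝ))⁻¹ := ⟨by rw [he2]; linarith, by rw [he2]; linarith⟩
  have he1b : 0 ≤ e1 ∧ e1 ≤ (m:ℝ)⁻¹ := ⟨by rw [he1]; linarith, by rw [he1]; linarith⟩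
  have hHh2m : Hh (2 * m) = γ + Real.log 2 + Real.log m + e2 := by rw [he2]; ring
  have hHhm : Hh m = γ + Real.log m + e1 := by rw [he1]; ring
  rw [hHh2m, hHhm]
  have hLm : 0 ≤ Real.log m := Real.log_nonneg hmR
  have hL2 : 0 < Real.log 2 := log2_pos
  have hL2' : Real.log 2 < 1 := log2_lt_one
  have hp2 : (2 * (m:ℝ) + 1) * e2 ≤ 2 := by
    have h1 : (2 * (m:ℝ) + 1) * e2 ≤ (2 * (m:ℝ) + 1) * (2 * (m:ℝ))⁻¹ := by
      apply mul_le_mul_of_nonneg_left he2b.2 (by linarith)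
    have h2 : (2 * (m:ℝ) + 1) * (2 * (m:ℝ))⁻¹ ≤ 2 := by
      rw [mul_inv_le_iff₀ (by linarith)]
      linarith
    exact le_trans h1 h2
  have hp2' : 0 ≤ (2 * (m:ℝ) + 1) * e2 := mul_nonneg (by linarith) he2b.1
  have hp1 : (2 * (m:ℝ) + 2) * e1 ≤ 4 := by
    have h1 : (2 * (m:ℝ) + 2) * e1 ≤ (2 * (m:ℝ) + 2) * (m:ℝ)⁻¹ := by
      apply mul_le_mul_of_nonneg_left he1b.2 (by linarith)
    have h2 : (2 * (m:ℝ) + 2) * (m:ℝ)⁻¹ ≤ 4 := by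
      rw [mul_inv_le_iff₀ (by linarith)]
      linarith
    exact le_trans h1 h2
  have hp1' : 0 ≤ (2 * (m:ℝ) + 2) * e1 := mul_nonneg (by linarith) he1b.1
  rw [abs_le]
  constructor <;> nlinarith [hp2, hp2', hp1, hp1']

noncomputable def SS (m k : ℕ) : ℝ := ∑ a ∈ Icc 1 m, ∑ b ∈ Icc 1 k, ((a : ℝ) + b)⁻¹

lemma SS_symm (m k : ℕ) : SS m k = SS k m := by
  rw [SS, SS, Finset.sum_comm]
  apply Finset.sum_congr rfl; intro a _; apply Finset.sum_congr rfl; intro b _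
  rw [add_comm]

lemma row_nonneg (a k : ℕ) : 0 ≤ ∑ b ∈ Icc 1 k, ((a : ℝ) + b)⁻¹ := by
  apply Finset.sum_nonneg; intro b _; positivity

lemma row_le_Hh (a k : ℕ) : ∑ b ∈ Icc 1 k, ((a : ℝ) + b)⁻¹ ≤ Hh k := by
  apply Finset.sum_le_sum
  intro b hb
  rw [Finset.mem_Icc] at hb
  have hb1 : (1 : ℝ) ≤ (b : ℝ) := by exact_mod_cast hb.1
  apply inv_anti₀ (by linarith)
  simp

lemma SS_nonneg (m k : ℕ) : 0 ≤ SS m k :=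
  Finset.sum_nonneg fun a _ => row_nonneg a k

lemma SS_mm_est' {m : ℕ} (hm : 1 ≤ m) :
    |SS m m - 2 * m * Real.log 2| ≤ Real.log m + 8 := by
  rw [SS]; exact SS_mm_est hm

lemma SS_succ (m k : ℕ) : SS (m + 1) k = SS m k + ∑ b ∈ Icc 1 k, (((m : ℝ) + 1) + b)⁻¹ := by
  rw [SS, SS, ← Finset.Ico_add_one_right_eq_Icc, Finset.sum_Ico_succ_top (by omega)]
  rw [Finset.Ico_add_one_right_eq_Icc]
  push_cast
  ring_nf

lemma SS_close {m k j : ℕ} (h : k ≤ m) (h2 : m ≤ k + 1) :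
    SS k j ≤ SS m j ∧ SS m j ≤ SS k j + Hh j := by
  rcases (by omega : m = k ∨ m = k + 1) with rfl | rfl
  · exact ⟨le_refl _, by linarith [Hh_nonneg j]⟩
  · rw [SS_succ]
    have h1 := row_nonneg (k + 1) j
    have h2' := row_le_Hh (k + 1) j
    push_cast at h1 h2'
    constructor
    · linarith
    · linarith

noncomputable def QQ (m k : ℕ) : ℝ := ∑ a ∈ Icc 1 m, ∑ b ∈ Icc 1 k, (((a : ℝ) + b) ^ 2)⁻¹

lemma QQ_nonneg (m k : ℕ) : 0 ≤ QQ m k := by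
  apply Finset.sum_nonneg; intro a _; apply Finset.sum_nonneg; intro b _; positivity

lemma inv_telescope {x : ℝ} (hx : 0 < x) : (x * (x + 1))⁻¹ = x⁻¹ - (x + 1)⁻¹ := by
  field_simp
  ring

lemma Qrow_ub {a : ℕ} (ha : 1 ≤ a) (k : ℕ) :
    ∑ b ∈ Icc 1 k, (((a : ℝ) + b) ^ 2)⁻¹ ≤ (a : ℝ)⁻¹ := by
  have haR : (1 : ℝ) ≤ (a : ℝ) := by exact_mod_cast ha
  have h1 : ∑ b ∈ Icc 1 k, (((a : ℝ) + b) ^ 2)⁻¹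
      ≤ ∑ i ∈ range k, (((a : ℝ) + i)⁻¹ - ((a : ℝ) + (i + 1))⁻¹) := by
    rw [Icc_to_range]
    apply Finset.sum_le_sum
    intro i _
    have hx : (0 : ℝ) < (a : ℝ) + i := by positivity
    rw [show ((a : ℝ) + i)⁻¹ - ((a : ℝ) + (i + 1))⁻¹
        = (((a : ℝ) + i) * (((a : ℝ) + i) + 1))⁻¹ by
      rw [inv_telescope hx]; ring_nf]
    apply inv_anti₀ (by positivity)
    push_cast
    nlinarith [hx]
  have h2 : ∑ i ∈ range k, (((a : ℝ) + i)⁻¹ - ((a : ℝ) + (i + 1))⁻¹)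
      = (a : ℝ)⁻¹ - ((a : ℝ) + k)⁻¹ := by
    have := Finset.sum_range_sub' (fun i => ((a : ℝ) + i)⁻¹) k
    simp only [Nat.cast_add, Nat.cast_one, Nat.cast_zero, add_zero] at this ⊢
    rw [← this]
  have h3 : (0 : ℝ) < (a : ℝ) + k := by positivity
  calc ∑ b ∈ Icc 1 k, (((a : ℝ) + b) ^ 2)⁻¹ ≤ (a : ℝ)⁻¹ - ((a : ℝ) + k)⁻¹ := h1.trans h2.le
    _ ≤ (a : ℝ)⁻¹ := by linarith [inv_pos.mpr h3]

lemma Qrow_lb (a k : ℕ) :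
    ((a : ℝ) + 1)⁻¹ - ((a : ℝ) + 1 + k)⁻¹ ≤ ∑ b ∈ Icc 1 k, (((a : ℝ) + b) ^ 2)⁻¹ := by
  have h1 : ∑ i ∈ range k, ((((a : ℝ) + 1) + i)⁻¹ - (((a : ℝ) + 1) + (i + 1))⁻¹)
      ≤ ∑ b ∈ Icc 1 k, (((a : ℝ) + b) ^ 2)⁻¹ := by
    rw [Icc_to_range]
    apply Finset.sum_le_sum
    intro i _
    have hx : (0 : ℝ) < (a : ℝ) + 1 + i := by positivity
    rw [show ((a : ℝ) + 1 + i)⁻¹ - ((a : ℝ) + 1 + (i + 1))⁻¹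
        = (((a : ℝ) + 1 + i) * (((a : ℝ) + 1 + i) + 1))⁻¹ by
      rw [inv_telescope hx]; ring_nf]
    apply inv_anti₀ (by positivity)
    push_cast
    nlinarith [hx]
  have h2 : ∑ i ∈ range k, ((((a : ℝ) + 1) + i)⁻¹ - (((a : ℝ) + 1) + (i + 1))⁻¹)
      = ((a : ℝ) + 1)⁻¹ - ((a : ℝ) + 1 + k)⁻¹ := by
    have := Finset.sum_range_sub' (fun i => ((a : ℝ) + 1 + i)⁻¹) k
    simp only [Nat.cast_add, Nat.cast_one, Nat.cast_zero, add_zero] at this ⊢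
    rw [← this]
  linarith [h1, h2.ge]

lemma QQ_ub {m : ℕ} (k : ℕ) (hm : 1 ≤ m) : QQ m k ≤ 1 + Real.log m := by
  have h1 : QQ m k ≤ Hh m := by
    rw [QQ, Hh]
    apply Finset.sum_le_sum
    intro a ha
    rw [Finset.mem_Icc] at ha
    exact Qrow_ub ha.1 k
  exact h1.trans (Hh_le m (by omega))

lemma QQ_lb {m k : ℕ} (hm : 1 ≤ m) (hk : 1 ≤ k) (hmk : m ≤ k + 2) :
    Real.log ((m : ℝ) + 2) - 2 ≤ QQ m k := by
  have h1 : ∑ a ∈ Icc 1 m, (((a : ℝ) + 1)⁻¹ - ((a : ℝ) + 1 + k)⁻¹) ≤ QQ m k :=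
    Finset.sum_le_sum fun a _ => Qrow_lb a k
  have h2 : ∑ a ∈ Icc 1 m, ((a : ℝ) + 1)⁻¹ = Hh (m + 1) - 1 := by
    rw [Hh_range, Finset.sum_range_succ', Icc_to_range]
    push_cast
    have e2 : ∑ i ∈ range m, ((1:ℝ) + (↑i + 1))⁻¹ = ∑ i ∈ range m, ((1:ℝ) + ↑i + 1)⁻¹ := by
      apply Finset.sum_congr rfl; intro i _; ring_nf
    rw [e2]
    norm_num
  have h3 : ∑ a ∈ Icc 1 m, ((a : ℝ) + 1 + k)⁻¹ ≤ (m : ℝ) * ((k : ℝ) + 2)⁻¹ := by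
    have := Finset.sum_le_card_nsmul (Icc 1 m) (fun a => ((a : ℝ) + 1 + k)⁻¹) ((k : ℝ) + 2)⁻¹ ?_
    · rw [Nat.card_Icc] at this
      simpa [nsmul_eq_mul] using this
    · intro a ha
      rw [Finset.mem_Icc] at ha
      have : (1 : ℝ) ≤ (a : ℝ) := by exact_mod_cast ha.1
      apply inv_anti₀ (by positivity)
      linarith
  have h4 : (m : ℝ) * ((k : ℝ) + 2)⁻¹ ≤ 1 := by
    rw [mul_inv_le_iff₀ (by positivity)]
    have : (m : ℝ) ≤ (k : ℝ) + 2 := by exact_mod_cast hmk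
    linarith
  have h5 : Real.log ((m : ℝ) + 2) ≤ Hh (m + 1) := by
    have := log_le_Hh (m + 1)
    push_cast at this
    convert this using 2
    ring
  have hsub : ∑ a ∈ Icc 1 m, (((a : ℝ) + 1)⁻¹ - ((a : ℝ) + 1 + k)⁻¹)
      = (∑ a ∈ Icc 1 m, ((a : ℝ) + 1)⁻¹) - ∑ a ∈ Icc 1 m, ((a : ℝ) + 1 + k)⁻¹ :=
    Finset.sum_sub_distrib _ _
  linarith

lemma Psum_le (m : ℕ) : ∑ r ∈ Icc 1 m, ((r : ℝ) ^ 2)⁻¹ ≤ 2 := by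
  rcases Nat.eq_zero_or_pos m with rfl | hm
  · simp
  have key : ∀ n : ℕ, 1 ≤ n → ∑ r ∈ Icc 1 n, ((r : ℝ) ^ 2)⁻¹ ≤ 2 - (n : ℝ)⁻¹ := by
    intro n hn
    induction n, hn using Nat.le_induction with
    | base => simp; norm_num
    | succ n hn ih =>
      rw [← Finset.Ico_add_one_right_eq_Icc, Finset.sum_Ico_succ_top (by omega), Finset.Ico_add_one_right_eq_Icc]
      have hnR : (1 : ℝ) ≤ (n : ℝ) := by exact_mod_cast hn
      have hstep : (((n : ℕ) + 1 : ℕ) : ℝ) = (n : ℝ) + 1 := by push_cast; ring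
      have h1 : (((n : ℝ) + 1) ^ 2)⁻¹ ≤ ((n : ℝ) * ((n : ℝ) + 1))⁻¹ := by
        apply inv_anti₀ (by positivity)
        nlinarith
      have h2 : ((n : ℝ) * ((n : ℝ) + 1))⁻¹ = (n : ℝ)⁻¹ - ((n : ℝ) + 1)⁻¹ :=
        inv_telescope (by linarith)
      rw [hstep]
      push_cast
      linarith
  have := key m hm
  have : (0:ℝ) < (m:ℝ)⁻¹ := by positivity
  linarith [key m hm]

section torus
variable {N : ℕ} [NeZero N]

lemma rhoN_min (i : ZMod N) : rhoN N i = min i.val (N - i.val) := by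
  have hv : i.val < N := ZMod.val_lt i
  rw [rhoN]
  split_ifs with h
  · omega
  · omega

lemma rhoN_neg (i : ZMod N) : rhoN N (-i) = rhoN N i := by
  rw [rhoN_min, rhoN_min, ZMod.neg_val]
  split_ifs with h
  · simp [h]
  · have hv : i.val < N := ZMod.val_lt i
    have h0 : i.val ≠ 0 := fun hc => h (by rwa [← ZMod.val_eq_zero])
    omega

lemma rhoN_zero : rhoN N (0 : ZMod N) = 0 := by
  rw [rhoN_min, ZMod.val_zero]
  simp

lemma rhoN_eq_zero_iff (i : ZMod N) : rhoN N i = 0 ↔ i = 0 := by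
  constructor
  · intro h
    rw [rhoN_min] at h
    have hv : i.val < N := ZMod.val_lt i
    have : i.val = 0 := by omega
    rwa [← ZMod.val_eq_zero]
  · rintro rfl; exact rhoN_zero

lemma torusDist_self (u : Vtx N) : torusDist N u u = 0 := by
  simp [torusDist, rhoN_zero]

lemma torusDist_pos {u v : Vtx N} (h : u ≠ v) : 1 ≤ torusDist N u v := by
  rw [torusDist, Nat.one_le_iff_ne_zero]
  intro hc
  apply h
  have h1 : rhoN N (u.1 - v.1) = 0 := by omega
  have h2 : rhoN N (u.2 - v.2) = 0 := by omega
  rw [rhoN_eq_zero_iff, sub_eq_zero] at h1 h2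
  exact Prod.ext h1 h2

lemma torusDist_symm (u v : Vtx N) : torusDist N u v = torusDist N v u := by
  rw [torusDist, torusDist, ← rhoN_neg (u.1 - v.1), ← rhoN_neg (u.2 - v.2), neg_sub, neg_sub]

lemma edge_eq {c : ℝ} (hc : 0 < c) (hc1 : c ≤ 1) (u v : Vtx N) :
    edgeProb N c u v = (c / N) * ((torusDist N u v : ℝ))⁻¹ := by
  rw [edgeProb]
  split_ifs with h
  · subst h; rw [torusDist_self]; simp
  · have hd : 1 ≤ torusDist N u v := torusDist_pos h
    have hdR : (1 : ℝ) ≤ (torusDist N u v : ℝ) := by exact_mod_cast hd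
    have hNR : (1 : ℝ) ≤ (N : ℝ) := by
      have := Nat.one_le_iff_ne_zero.mpr (NeZero.ne N); exact_mod_cast this
    have hmin : c / ((N : ℝ) * (torusDist N u v : ℝ)) ≤ 1 := by
      rw [div_le_one (by nlinarith)]
      nlinarith
    rw [min_eq_left hmin, div_mul_eq_div_div, div_eq_mul_inv (c / N)]

lemma edge_symm (c : ℝ) (u v : Vtx N) : edgeProb N c u v = edgeProb N c v u := by
  rw [edgeProb, edgeProb, torusDist_symm]
  congr 1
  simp [eq_comm]

lemma edge_translate (c : ℝ) (u w : Vtx N) : edgeProb N c u (w + u) = edgeProb N c 0 w := by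
  rw [edgeProb, edgeProb]
  have h1 : (u = w + u) = ((0 : Vtx N) = w) := by
    apply propext
    constructor
    · intro h; have := h.symm; rw [add_eq_right] at this; exact this.symm
    · rintro h; rw [← h]; simp
  have h2 : torusDist N u (w + u) = torusDist N 0 w := by
    rw [torusDist, torusDist]
    congr 1
    · congr 1; show u.1 - (w.1 + u.1) = 0 - w.1; ring
    · congr 1; show u.2 - (w.2 + u.2) = 0 - w.2; ring
  rw [h2]
  exact if_congr (iff_of_eq h1) rfl rfl

lemma sum_edge_eq (c : ℝ) (u : Vtx N) :
    ∑ w : Vtx N, edgeProb N c u w = ∑ w : Vtx N, edgeProb N c 0 w := by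
  exact (Fintype.sum_equiv (Equiv.addRight u) (fun w => edgeProb N c 0 w)
    (fun w => edgeProb N c u w) (fun w => (edge_translate c u w).symm)).symm

lemma sum_edge_sq_eq (c : ℝ) (u : Vtx N) :
    ∑ x : Vtx N, (edgeProb N c u x) ^ 2 = ∑ x : Vtx N, (edgeProb N c 0 x) ^ 2 := by
  exact (Fintype.sum_equiv (Equiv.addRight u) (fun x => (edgeProb N c 0 x) ^ 2)
    (fun x => (edgeProb N c u x) ^ 2) (fun x => by
      show (edgeProb N c 0 x) ^ 2 = (edgeProb N c u (x + u)) ^ 2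
      rw [edge_translate])).symm

lemma sum_zmod (g : ZMod N → ℝ) : ∑ a : ZMod N, g a = ∑ i ∈ range N, g (i : ZMod N) := by
  apply Finset.sum_nbij' (fun a => ZMod.val a) (fun i => (i : ZMod N))
  · intro a _; exact Finset.mem_range.mpr (ZMod.val_lt a)
  · intro i _; exact Finset.mem_univ _
  · intro a _; exact ZMod.natCast_rightInverse a
  · intro i hi; exact ZMod.val_cast_of_lt (Finset.mem_range.mp hi)
  · intro a _; rw [ZMod.natCast_rightInverse a]

lemma coord_sum (g : ℕ → ℝ) :
    ∑ a : ZMod N, g (rhoN N a)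
      = g 0 + (∑ r ∈ Icc 1 (N / 2), g r) + ∑ r ∈ Icc 1 (N - 1 - N / 2), g r := by
  have hN : 1 ≤ N := Nat.one_le_iff_ne_zero.mpr (NeZero.ne N)
  rw [sum_zmod (fun a => g (rhoN N a))]
  have hval : ∀ i ∈ range N, g (rhoN N (i : ZMod N)) = g (min i (N - i)) := by
    intro i hi
    rw [rhoN_min, ZMod.val_cast_of_lt (Finset.mem_range.mp hi)]
  rw [Finset.sum_congr rfl hval]
  set M := N / 2 with hM
  have hMN : M + 1 ≤ N := by omega
  rw [Finset.range_eq_Ico, ← Finset.sum_Ico_consecutive _ (by omega : 0 ≤ M + 1) hMN]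
  have h1 : ∑ i ∈ Finset.Ico 0 (M + 1), g (min i (N - i)) = g 0 + ∑ r ∈ Icc 1 M, g r := by
    have he : ∀ i ∈ Finset.Ico 0 (M + 1), g (min i (N - i)) = g i := by
      intro i hi
      rw [Finset.mem_Ico] at hi
      have : min i (N - i) = i := by omega
      rw [this]
    rw [Finset.sum_congr rfl he, ← Finset.range_eq_Ico, Finset.sum_range_succ']
    rw [Icc_to_range M g]
    have : ∀ i ∈ range M, g (i + 1) = g (1 + i) := by
      intro i _; congr 1; omega
    rw [Finset.sum_congr rfl this]
    ring
  have h2 : ∑ i ∈ Finset.Ico (M + 1) N, g (min i (N - i)) = ∑ r ∈ Icc 1 (N - 1 - M), g r := by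
    apply Finset.sum_nbij' (fun i => N - i) (fun r => N - r)
    · intro i hi
      rw [Finset.mem_Ico] at hi
      rw [Finset.mem_Icc]
      omega
    · intro r hr
      rw [Finset.mem_Icc] at hr
      rw [Finset.mem_Ico]
      omega
    · intro i hi
      rw [Finset.mem_Ico] at hi
      omega
    · intro r hr
      rw [Finset.mem_Icc] at hr
      omega
    · intro i hi
      rw [Finset.mem_Ico] at hi
      have : min i (N - i) = N - i := by omega
      rw [this]
  rw [h1, h2]

lemma torus_decomp (g : ℕ → ℝ) :
    ∑ x : Vtx N, g (torusDist N 0 x)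
      = g (0 + 0)
        + 2 * (∑ s ∈ Icc 1 (N / 2), g (0 + s)) + 2 * (∑ s ∈ Icc 1 (N - 1 - N / 2), g (0 + s))
        + (∑ r ∈ Icc 1 (N / 2), ∑ s ∈ Icc 1 (N / 2), g (r + s))
        + (∑ r ∈ Icc 1 (N / 2), ∑ s ∈ Icc 1 (N - 1 - N / 2), g (r + s))
        + (∑ r ∈ Icc 1 (N - 1 - N / 2), ∑ s ∈ Icc 1 (N / 2), g (r + s))
        + (∑ r ∈ Icc 1 (N - 1 - N / 2), ∑ s ∈ Icc 1 (N - 1 - N / 2), g (r + s)) := by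
  have hdist : ∀ x : Vtx N, torusDist N 0 x = rhoN N x.1 + rhoN N x.2 := by
    intro x
    rw [torusDist]
    show rhoN N (0 - x.1) + rhoN N (0 - x.2) = _
    rw [zero_sub, zero_sub, rhoN_neg, rhoN_neg]
  have h0 : ∑ x : Vtx N, g (torusDist N 0 x)
      = ∑ a : ZMod N, ∑ b : ZMod N, g (rhoN N a + rhoN N b) := by
    rw [Fintype.sum_prod_type]
    apply Finset.sum_congr rfl; intro a _
    apply Finset.sum_congr rfl; intro b _
    rw [hdist (a, b)]
  rw [h0]
  rw [coord_sum (fun r => ∑ b : ZMod N, g (r + rhoN N b))]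
  rw [coord_sum (fun s => g (0 + s))]
  have hin : ∀ (r : ℕ), ∑ b : ZMod N, g (r + rhoN N b)
      = g (r + 0) + (∑ s ∈ Icc 1 (N / 2), g (r + s)) + ∑ s ∈ Icc 1 (N - 1 - N / 2), g (r + s) :=
    fun r => coord_sum (fun s => g (r + s))
  rw [Finset.sum_congr rfl (fun r _ => hin r), Finset.sum_congr rfl (fun r _ => hin r)]
  rw [Finset.sum_add_distrib, Finset.sum_add_distrib, Finset.sum_add_distrib,
    Finset.sum_add_distrib]
  have e1 : ∀ (m : ℕ), ∑ r ∈ Icc 1 m, g (r + 0) = ∑ s ∈ Icc 1 m, g (0 + s) := by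
    intro m; apply Finset.sum_congr rfl; intro r _; congr 1; omega
  rw [e1, e1]
  ring

noncomputable def PP (m : ℕ) : ℝ := ∑ r ∈ Icc 1 m, ((r : ℝ) ^ 2)⁻¹

lemma PP_nonneg (m : ℕ) : 0 ≤ PP m := by
  apply Finset.sum_nonneg; intro r _; positivity

lemma PP_le (m : ℕ) : PP m ≤ 2 := Psum_le m

section bridge
variable {N : ℕ} [NeZero N]

lemma T1_eq :
    ∑ x : Vtx N, ((torusDist N 0 x : ℝ))⁻¹
      = 2 * Hh (N / 2) + 2 * Hh (N - 1 - N / 2)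
        + SS (N / 2) (N / 2) + SS (N / 2) (N - 1 - N / 2)
        + SS (N - 1 - N / 2) (N / 2) + SS (N - 1 - N / 2) (N - 1 - N / 2) := by
  rw [torus_decomp (fun n => ((n : ℕ) : ℝ)⁻¹)]
  simp only [zero_add, Nat.add_zero, Nat.cast_add, Nat.cast_zero]
  rw [Hh, Hh, SS, SS, SS, SS]
  norm_num

lemma T2_eq :
    ∑ x : Vtx N, (((torusDist N 0 x : ℝ)) ^ 2)⁻¹
      = 2 * PP (N / 2) + 2 * PP (N - 1 - N / 2)
        + QQ (N / 2) (N / 2) + QQ (N / 2) (N - 1 - N / 2)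
        + QQ (N - 1 - N / 2) (N / 2) + QQ (N - 1 - N / 2) (N - 1 - N / 2) := by
  rw [torus_decomp (fun n => (((n : ℕ) : ℝ) ^ 2)⁻¹)]
  simp only [zero_add, Nat.add_zero, Nat.cast_add, Nat.cast_zero]
  rw [PP, PP, QQ, QQ, QQ, QQ]
  norm_num

lemma log_ge_one {N : ℕ} (hN : 3 ≤ N) : 1 ≤ Real.log N := by
  rw [Real.le_log_iff_exp_le (by positivity)]
  have h1 : Real.exp 1 < 2.7182818286 := Real.exp_one_lt_d9
  have h2 : (3 : ℝ) ≤ (N : ℝ) := by exact_mod_cast hN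
  linarith

lemma log_sqrt_bound {N : ℕ} (hN : 1 ≤ N) : Real.log N ≤ 2 * Real.sqrt N := by
  have h0 : (1 : ℝ) ≤ (N : ℝ) := by exact_mod_cast hN
  have hs : 0 < Real.sqrt N := Real.sqrt_pos.mpr (by linarith)
  have h1 : Real.log (Real.sqrt N) ≤ Real.sqrt N - 1 := Real.log_le_sub_one_of_pos hs
  have h2 : Real.log (Real.sqrt N) = Real.log N / 2 := Real.log_sqrt (by linarith)
  linarith [h2 ▸ h1]

lemma T1_est (hN : 1000000 ≤ N) :
    |(∑ x : Vtx N, ((torusDist N 0 x : ℝ))⁻¹) - 4 * N * Real.log 2| ≤ 56 * Real.log N := by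
  rw [T1_eq]
  set M := N / 2 with hM
  set K := N - 1 - N / 2 with hK
  have hM1 : 1 ≤ M := by omega
  have hK1 : 1 ≤ K := by omega
  have hKM : K ≤ M := by omega
  have hMK : M ≤ K + 1 := by omega
  have h2M : 2 * M ≤ N := by omega
  have hN2M : N ≤ 2 * M + 1 := by omega
  have hL1 : 1 ≤ Real.log N := log_ge_one (by omega)
  have hLM : Real.log M ≤ Real.log N := by
    apply Real.log_le_log (by exact_mod_cast hM1)
    exact_mod_cast (by omega : M ≤ N)
  have hLK : Real.log K ≤ Real.log N := by
    apply Real.log_le_log (by exact_mod_cast hK1)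
    exact_mod_cast (by omega : K ≤ N)
  have e1 := abs_le.mp (SS_mm_est' hM1)
  have c1 := SS_close (j := M) hKM hMK
  have c2 := SS_close (j := K) hKM hMK
  have csymm : SS M K = SS K M := SS_symm M K
  have hHM : Hh M ≤ 1 + Real.log N := (Hh_le M (by omega)).trans (by linarith)
  have hHK : Hh K ≤ 1 + Real.log N := (Hh_le K (by omega)).trans (by linarith)
  have hHMn := Hh_nonneg M
  have hHKn := Hh_nonneg K
  have hlog2a : 0 < Real.log 2 := log2_pos
  have hlog2b : Real.log 2 < 1 := log2_lt_one
  have hcast : (N : ℝ) - 2 * (M : ℝ) ∈ Set.Icc (0 : ℝ) 1 := by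
    constructor
    · have : (2 * M : ℕ) ≤ N := h2M
      have := (Nat.cast_le (α := ℝ)).mpr this
      push_cast at this
      linarith
    · have := (Nat.cast_le (α := ℝ)).mpr hN2M
      push_cast at this
      linarith
  obtain ⟨hc0, hc1'⟩ := hcast
  have hprod1 : 0 ≤ ((N : ℝ) - 2 * M) * Real.log 2 := mul_nonneg hc0 hlog2a.le
  have hprod2 : ((N : ℝ) - 2 * M) * Real.log 2 ≤ 1 := by nlinarith
  rw [abs_le]
  constructor <;> linarith [e1.1, e1.2, c1.1, c1.2, c2.1, c2.2]
end bridge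

section est2
variable {N : ℕ} [NeZero N]

lemma T2_est (hN : 1000000 ≤ N) :
    |(∑ x : Vtx N, (((torusDist N 0 x : ℝ)) ^ 2)⁻¹) - 4 * Real.log N| ≤ 16 := by
  rw [T2_eq]
  set M := N / 2 with hM
  set K := N - 1 - N / 2 with hK
  have hM1 : 1 ≤ M := by omega
  have hK1 : 1 ≤ K := by omega
  have hL1 : 1 ≤ Real.log N := log_ge_one (by omega)
  have hN0 : (0 : ℝ) < N := by positivity
  have hlog4 : Real.log 4 ≤ 2 := by
    have : (4 : ℝ) = 2 ^ 2 := by norm_num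
    rw [this, Real.log_pow]
    have := log2_lt_one
    push_cast
    linarith
  have hlow : ∀ m k : ℕ, (N : ℝ) / 4 ≤ (m : ℝ) + 2 → 1 ≤ m → 1 ≤ k → m ≤ k + 2 →
      Real.log N - 4 ≤ QQ m k := by
    intro m k hm4 hm hk hmk
    have h1 := QQ_lb hm hk hmk
    have h2 : Real.log ((N : ℝ) / 4) ≤ Real.log ((m : ℝ) + 2) :=
      Real.log_le_log (by positivity) hm4
    have h3 : Real.log ((N : ℝ) / 4) = Real.log N - Real.log 4 :=
      Real.log_div (by positivity) (by norm_num)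
    linarith
  have hub : ∀ m k : ℕ, 1 ≤ m → m ≤ N → QQ m k ≤ 1 + Real.log N := by
    intro m k hm hmN
    have h1 := QQ_ub k hm
    have h2 : Real.log m ≤ Real.log N := by
      apply Real.log_le_log (by exact_mod_cast hm)
      exact_mod_cast hmN
    linarith
  have hM4 : (N : ℝ) / 4 ≤ (M : ℝ) + 2 := by
    have : N ≤ 2 * M + 1 := by omega
    have := (Nat.cast_le (α := ℝ)).mpr this
    push_cast at this
    linarith
  have hK4 : (N : ℝ) / 4 ≤ (K : ℝ) + 2 := by
    have : N ≤ 2 * K + 2 := by omega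
    have := (Nat.cast_le (α := ℝ)).mpr this
    push_cast at this
    linarith
  have q1l := hlow M M hM4 hM1 hM1 (by omega)
  have q2l := hlow M K hM4 hM1 hK1 (by omega)
  have q3l := hlow K M hK4 hK1 hM1 (by omega)
  have q4l := hlow K K hK4 hK1 hK1 (by omega)
  have q1u := hub M M hM1 (by omega)
  have q2u := hub M K hM1 (by omega)
  have q3u := hub K M hK1 (by omega)
  have q4u := hub K K hK1 (by omega)
  have p1 := PP_le M
  have p2 := PP_le K
  have p1n := PP_nonneg M
  have p2n := PP_nonneg K
  rw [abs_le]
  constructor <;> linarith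

end est2

set_option maxHeartbeats 2000000 in
/-- At criticality there are `C₀ > 0` and `N₀` such that for all `N ≥ N₀` and every
vertex `u`, `|P²(u,u) − 4c²·(log N)/N²| ≤ C₀/N²`, where
`P²(u,u) = Σ_x P(u,x)·P(x,u)`. -/
theorem stmt12 :
    ∃ C₀ : ℝ, 0 < C₀ ∧ ∃ N₀ : ℕ, ∀ (N : ℕ) [NeZero N], N₀ ≤ N →
      ∀ u : Vtx N,
        |(∑ x : Vtx N, transP N ccr u x * transP N ccr x u) -
            4 * ccr ^ 2 * Real.log N / (N : ℝ) ^ 2| ≤ C₀ / (N : ℝ) ^ 2 := by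
  refine ⟨6000, by norm_num, 1000000, ?_⟩
  intro N _inst hN u
  have hlog29 : (0.6931471803 : ℝ) < Real.log 2 := Real.log_two_gt_d9
  have hlog2b : Real.log 2 < 1 := log2_lt_one
  have hc0 : 0 < ccr := by rw [ccr]; positivity
  have hc1 : ccr ≤ 1 := by
    rw [ccr, div_le_one (by positivity)]
    linarith
  have hc4 : ccr * (4 * Real.log 2) = 1 := by
    rw [ccr]
    field_simp
  have hN0 : (0 : ℝ) < N := by positivity
  have hNR : (1000000 : ℝ) ≤ (N : ℝ) := by exact_mod_cast hN
  set L := Real.log N with hLdef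
  have hL1 : 1 ≤ L := log_ge_one (by omega)
  have hL2 : L ≤ 2 * Real.sqrt N := log_sqrt_bound (by omega)
  have hs0 : 0 ≤ Real.sqrt N := Real.sqrt_nonneg _
  have hNs : Real.sqrt N * Real.sqrt N = N := Real.mul_self_sqrt hN0.le
  have h1000 : (1000 : ℝ) ≤ Real.sqrt N := by
    have : Real.sqrt 1000000 ≤ Real.sqrt N := Real.sqrt_le_sqrt hNR
    have h2 : Real.sqrt 1000000 = 1000 := by
      rw [show (1000000 : ℝ) = 1000 ^ 2 by norm_num, Real.sqrt_sq (by norm_num)]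
    linarith
  have hLsq : L ^ 2 ≤ 4 * N := by nlinarith
  -- the structural quantities
  set T1v := ∑ x : Vtx N, ((torusDist N 0 x : ℝ))⁻¹ with hT1v
  set T2v := ∑ x : Vtx N, (((torusDist N 0 x : ℝ)) ^ 2)⁻¹ with hT2v
  set Zv := ∑ w : Vtx N, edgeProb N ccr 0 w with hZvdef
  set S2v := ∑ x : Vtx N, (edgeProb N ccr 0 x) ^ 2 with hS2vdef
  have hT1 : |T1v - 4 * N * Real.log 2| ≤ 56 * L := T1_est hN
  have hT2 : |T2v - 4 * L| ≤ 16 := T2_est hN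
  have hZv : Zv = (ccr / N) * T1v := by
    rw [hZvdef, hT1v, Finset.mul_sum]
    apply Finset.sum_congr rfl
    intro w _
    rw [edge_eq hc0 hc1]
  have hS2v : S2v = (ccr / N) ^ 2 * T2v := by
    rw [hS2vdef, hT2v, Finset.mul_sum]
    apply Finset.sum_congr rfl
    intro x _
    rw [edge_eq hc0 hc1, mul_pow, ← inv_pow]
  -- reduce the goal sum
  have hden : ∀ v : Vtx N, ∑ w : Vtx N, edgeProb N ccr v w = Zv := fun v => sum_edge_eq ccr v
  have hgoal : ∑ x : Vtx N, transP N ccr u x * transP N ccr x u = S2v / Zv ^ 2 := by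
    have h1 : ∀ x : Vtx N, transP N ccr u x * transP N ccr x u
        = (edgeProb N ccr u x) ^ 2 / Zv ^ 2 := by
      intro x
      rw [transP, transP, hden u, hden x, edge_symm ccr x u]
      ring
    rw [Finset.sum_congr rfl (fun x _ => h1 x), ← Finset.sum_div]
    rw [sum_edge_sq_eq ccr u]
  -- |Zv - 1| ≤ 56 L / N
  have hZdiff : Zv - 1 = (ccr / N) * (T1v - 4 * N * Real.log 2) := by
    have h1 : ccr / N * (4 * N * Real.log 2) = ccr * (4 * Real.log 2) := by
      field_simp
    rw [hZv, mul_sub, h1, hc4]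
  have hZ1 : |Zv - 1| ≤ 56 * L / N := by
    rw [hZdiff, abs_mul, abs_of_pos (by positivity : (0:ℝ) < ccr / N)]
    have h1 : ccr / N ≤ 1 / N := by gcongr
    have h2 : ccr / N * |T1v - 4 * N * Real.log 2| ≤ (1 / N) * (56 * L) := by
      apply mul_le_mul h1 hT1 (abs_nonneg _) (by positivity)
    calc ccr / N * |T1v - 4 * N * Real.log 2| ≤ (1 / N) * (56 * L) := h2
      _ = 56 * L / N := by ring
  have hsmall : 56 * L / N ≤ 1 / 4 := by
    rw [div_le_div_iff₀ hN0 (by norm_num)]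
    nlinarith
  have hZlb : 3 / 4 ≤ Zv := by
    have := (abs_le.mp (hZ1.trans hsmall)).1
    linarith
  have hZub : Zv ≤ 5 / 4 := by
    have := (abs_le.mp (hZ1.trans hsmall)).2
    linarith
  have hZ2 : |Zv ^ 2 - 1| ≤ 168 * L / N := by
    have he : Zv ^ 2 - 1 = (Zv - 1) * (Zv + 1) := by ring
    rw [he, abs_mul]
    have h1 : |Zv + 1| ≤ 9 / 4 := by rw [abs_of_pos (by linarith)]; linarith
    calc |Zv - 1| * |Zv + 1| ≤ (56 * L / N) * (9 / 4) :=
          mul_le_mul hZ1 h1 (abs_nonneg _) (by positivity)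
      _ ≤ 168 * L / N := by
          rw [div_mul_eq_mul_div, div_le_div_iff₀ hN0 hN0]
          nlinarith
  have hS2diff : |S2v - 4 * ccr ^ 2 * L / (N : ℝ) ^ 2| ≤ 16 / (N : ℝ) ^ 2 := by
    have he : S2v - 4 * ccr ^ 2 * L / (N : ℝ) ^ 2 = (ccr ^ 2 / (N : ℝ) ^ 2) * (T2v - 4 * L) := by
      rw [hS2v, div_pow]
      field_simp
    rw [he, abs_mul, abs_of_pos (by positivity : (0:ℝ) < ccr ^ 2 / (N : ℝ) ^ 2)]
    have h1 : ccr ^ 2 / (N : ℝ) ^ 2 ≤ 1 / (N : ℝ) ^ 2 := by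
      gcongr
      nlinarith
    calc ccr ^ 2 / (N : ℝ) ^ 2 * |T2v - 4 * L| ≤ (1 / (N : ℝ) ^ 2) * 16 :=
          mul_le_mul h1 hT2 (abs_nonneg _) (by positivity)
      _ = 16 / (N : ℝ) ^ 2 := by ring
  -- final assembly
  set T := 4 * ccr ^ 2 * L / (N : ℝ) ^ 2 with hTdef
  have hT0 : 0 ≤ T := by rw [hTdef]; positivity
  have hTub : T ≤ 4 * L / (N : ℝ) ^ 2 := by
    rw [hTdef]
    gcongr
    nlinarith
  have hXbd : |S2v - T * Zv ^ 2| ≤ 2704 / (N : ℝ) ^ 2 := by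
    have he : S2v - T * Zv ^ 2 = (S2v - T) - T * (Zv ^ 2 - 1) := by ring
    have h1 : |T * (Zv ^ 2 - 1)| ≤ 2688 / (N : ℝ) ^ 2 := by
      rw [abs_mul, abs_of_nonneg hT0]
      calc T * |Zv ^ 2 - 1| ≤ (4 * L / (N : ℝ) ^ 2) * (168 * L / N) :=
            mul_le_mul hTub hZ2 (abs_nonneg _) (by positivity)
        _ = 672 * L ^ 2 / (N : ℝ) ^ 3 := by ring
        _ ≤ 2688 / (N : ℝ) ^ 2 := by
            rw [div_le_div_iff₀ (by positivity) (by positivity)]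
            nlinarith
    calc |S2v - T * Zv ^ 2| ≤ |S2v - T| + |T * (Zv ^ 2 - 1)| := by
          rw [he]; exact abs_sub _ _
      _ ≤ 16 / (N : ℝ) ^ 2 + 2688 / (N : ℝ) ^ 2 := add_le_add hS2diff h1
      _ = 2704 / (N : ℝ) ^ 2 := by ring
  have hZne : Zv ≠ 0 := by linarith
  have hfrac : S2v / Zv ^ 2 - T = (S2v - T * Zv ^ 2) / Zv ^ 2 := by
    field_simp
  rw [hgoal, hfrac]
  rw [abs_div, abs_of_pos (by positivity : (0:ℝ) < Zv ^ 2)]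
  have hZsq : 9 / 16 ≤ Zv ^ 2 := by nlinarith
  calc |S2v - T * Zv ^ 2| / Zv ^ 2 ≤ |S2v - T * Zv ^ 2| / (9 / 16) :=
        div_le_div_of_nonneg_left (abs_nonneg _) (by norm_num) hZsq
    _ = (16 / 9) * |S2v - T * Zv ^ 2| := by ring
    _ ≤ (16 / 9) * (2704 / (N : ℝ) ^ 2) := by
        apply mul_le_mul_of_nonneg_left hXbd (by norm_num)
    _ ≤ 6000 / (N : ℝ) ^ 2 := by
        rw [show (16 / 9 : ℝ) * (2704 / (N : ℝ) ^ 2) = (43264 / 9) / (N : ℝ) ^ 2 by ring]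
        rw [div_le_div_iff_of_pos_right (by positivity)]
        norm_num
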